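/- Let C be a generalized Cartan matrix on a finite nonempty set I and let v : I → ℝ be a configuration. If two (<-1)-plays from v each end at a configuration having no coordinate strictly less than -1, then the two plays have the same length and end at the same configuration. -/
import Mathlib

/-- Firing vertex `i`: `v` is replaced by `fun j => v j - C i j * v i`. -/
def fire {I : Type*} (C : I → I → ℤ) (i : I) (v : I → ℝ) : I → ℝ :=
  fun j => v j - (C i j : ℝ) * v i

/-- The configuration resulting from firing the vertices in the list `l` successively. -/
def playResult {I : Type*} (C : I → I → ℤ) : (I → ℝ) → List I → (I → ℝ)
  | v, [] => v
  | v, i :: l => playResult C (fire C i v) l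

/-- `IsPlay C θ v l` : the list `l` is a sequence of successive firings starting at `v`
in which each fired vertex has amplitude strictly less than `θ` at the time it is fired.
With `θ = 0` this is a legal play; with `θ = -1` a `(<-1)`-play. -/
def IsPlay {I : Type*} (C : I → I → ℤ) (θ : ℝ) : (I → ℝ) → List I → Prop
  | _, [] => True
  | v, i :: l => v i < θ ∧ IsPlay C θ (fire C i v) l

section Aux

variable {I : Type*} (C : I → I → ℤ)

theorem playResult_append (v : I → ℝ) (p q : List I) :
    playResult C v (p ++ q) = playResult C (playResult C v p) q := by
  induction p generalizing v with
  | nil => rfl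
  | cons i p ih => simpa [playResult] using ih (fire C i v)

theorem isPlay_append {θ : ℝ} {v : I → ℝ} {p q : List I} :
    IsPlay C θ v (p ++ q) ↔ IsPlay C θ v p ∧ IsPlay C θ (playResult C v p) q := by
  induction p generalizing v with
  | nil => simp [IsPlay, playResult]
  | cons i p ih => simp [IsPlay, playResult, ih, and_assoc]

theorem isPlay_cons {θ : ℝ} {v : I → ℝ} {i : I} {l : List I} :
    IsPlay C θ v (i :: l) ↔ v i < θ ∧ IsPlay C θ (fire C i v) l := Iff.rfl

set_option linter.unusedVariables false in
theorem polyA1A1 {v : I → ℝ} {i j : I} (hdiag : ∀ i, C i i = 2)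
    (hi : v i < -1) (hj : v j < -1) (h1 : C i j = 0) (h2 : C j i = 0) :
    IsPlay C (-1) v [i,j] ∧ IsPlay C (-1) v [j,i] ∧
      playResult C v [i,j] = playResult C v [j,i] := by
  refine ⟨?_, ?_, ?_⟩
  · simp only [IsPlay, fire, h1, h2, hdiag]
    push_cast
    refine ⟨hi, ?_, trivial⟩
    nlinarith
  · simp only [IsPlay, fire, h1, h2, hdiag]
    push_cast
    refine ⟨hj, ?_, trivial⟩
    nlinarith
  · funext k
    simp only [playResult, fire, h1, h2, hdiag]
    push_cast
    ring

theorem polyA2 {v : I → ℝ} {i j : I} (hdiag : ∀ i, C i i = 2)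
    (hi : v i < -1) (hj : v j < -1) (h1 : C i j = -1) (h2 : C j i = -1) :
    IsPlay C (-1) v [i,j,i] ∧ IsPlay C (-1) v [j,i,j] ∧
      playResult C v [i,j,i] = playResult C v [j,i,j] := by
  refine ⟨?_, ?_, ?_⟩
  · simp only [IsPlay, fire, h1, h2, hdiag]
    push_cast
    refine ⟨hi, ?_, ?_, trivial⟩ <;> nlinarith
  · simp only [IsPlay, fire, h1, h2, hdiag]
    push_cast
    refine ⟨hj, ?_, ?_, trivial⟩ <;> nlinarith
  · funext k
    simp only [playResult, fire, h1, h2, hdiag]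
    push_cast
    ring

theorem polyB2 {v : I → ℝ} {i j : I} (hdiag : ∀ i, C i i = 2)
    (hi : v i < -1) (hj : v j < -1) (h1 : C i j = -1) (h2 : C j i = -2) :
    IsPlay C (-1) v [i,j,i,j] ∧ IsPlay C (-1) v [j,i,j,i] ∧
      playResult C v [i,j,i,j] = playResult C v [j,i,j,i] := by
  refine ⟨?_, ?_, ?_⟩
  · simp only [IsPlay, fire, h1, h2, hdiag]
    push_cast
    refine ⟨hi, ?_, ?_, ?_, trivial⟩ <;> nlinarith
  · simp only [IsPlay, fire, h1, h2, hdiag]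
    push_cast
    refine ⟨hj, ?_, ?_, ?_, trivial⟩ <;> nlinarith
  · funext k
    simp only [playResult, fire, h1, h2, hdiag]
    push_cast
    ring

theorem polyG2 {v : I → ℝ} {i j : I} (hdiag : ∀ i, C i i = 2)
    (hi : v i < -1) (hj : v j < -1) (h1 : C i j = -1) (h2 : C j i = -3) :
    IsPlay C (-1) v [i,j,i,j,i,j] ∧ IsPlay C (-1) v [j,i,j,i,j,i] ∧
      playResult C v [i,j,i,j,i,j] = playResult C v [j,i,j,i,j,i] := by
  refine ⟨?_, ?_, ?_⟩
  · simp only [IsPlay, fire, h1, h2, hdiag]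
    push_cast
    refine ⟨hi, ?_, ?_, ?_, ?_, ?_, trivial⟩ <;> nlinarith
  · simp only [IsPlay, fire, h1, h2, hdiag]
    push_cast
    refine ⟨hj, ?_, ?_, ?_, ?_, ?_, trivial⟩ <;> nlinarith
  · funext k
    simp only [playResult, fire, h1, h2, hdiag]
    push_cast
    ring

theorem no_terminal_of_big (hdiag : ∀ i, C i i = 2)
    (hoff : ∀ i j, i ≠ j → C i j ≤ 0) {i j : I} (hne : i ≠ j)
    (hbig : 4 ≤ C i j * C j i) {v : I → ℝ} (hi : v i < -1) (hj : v j < -1)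
    {p : List I} (hp : IsPlay C (-1) v p)
    (hterm : ∀ k, -1 ≤ playResult C v p k) : False := by
  have hCij : C i j ≤ -1 := by
    rcases eq_or_ne (C i j) 0 with h | h
    · rw [h] at hbig; omega
    · have := hoff i j hne; omega
  have hCji : C j i ≤ -1 := by
    rcases eq_or_ne (C j i) 0 with h | h
    · rw [h] at hbig; omega
    · have := hoff j i hne.symm; omega
  have hc : (C i j : ℝ) ≤ -1 := by exact_mod_cast hCij
  have hd : (C j i : ℝ) ≤ -1 := by exact_mod_cast hCji
  have hcd : (4 : ℝ) ≤ (C i j : ℝ) * (C j i : ℝ) := by exact_mod_cast hbig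
  have key : ∀ (p : List I) (v : I → ℝ), IsPlay C (-1) v p →
      (-(C i j) : ℝ) * playResult C v p i + 2 * playResult C v p j ≤
        (-(C i j) : ℝ) * v i + 2 * v j := by
    intro p
    induction p with
    | nil => intro v _; exact le_refl _
    | cons k p ih =>
      intro v hv
      obtain ⟨hk, hpl⟩ := hv
      refine le_trans (ih (fire C k v) hpl) ?_
      by_cases hki : k = i
      · subst hki
        apply le_of_eq
        simp only [fire, hdiag]
        push_cast
        ring
      · by_cases hkj : k = j
        · subst hkj
          simp only [fire, hdiag]
          push_cast
          nlinarith [mul_nonneg (by linarith : (0:ℝ) ≤ (C i k : ℝ) * (C k i : ℝ) - 4)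
            (by linarith : (0:ℝ) ≤ -v k)]
        · have hki' : (C k i : ℝ) ≤ 0 := by exact_mod_cast hoff k i hki
          have hkj' : (C k j : ℝ) ≤ 0 := by exact_mod_cast hoff k j hkj
          have h1 : (0:ℝ) ≤ (C k i : ℝ) * v k := by nlinarith
          have h2 : (0:ℝ) ≤ (C k j : ℝ) * v k := by nlinarith
          simp only [fire]
          nlinarith [mul_nonneg (by linarith : (0:ℝ) ≤ -(C i j:ℝ)) h1]
  have h1 := key p v hp
  have h2 := hterm i
  have h3 := hterm j
  nlinarith [mul_le_mul_of_nonneg_left h2 (by linarith : (0:ℝ) ≤ -(C i j:ℝ)),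
    mul_lt_mul_of_pos_left hi (by linarith : (0:ℝ) < -(C i j:ℝ))]

/-- The polygon property for the `(<-1)`-game. -/
theorem polygon (hdiag : ∀ i, C i i = 2)
    (hoff : ∀ i j, i ≠ j → C i j ≤ 0)
    (hzero : ∀ i j, C i j = 0 ↔ C j i = 0)
    {v : I → ℝ} {i j : I} (hne : i ≠ j) (hi : v i < -1) (hj : v j < -1)
    {p : List I} (hp : IsPlay C (-1) v p)
    (hterm : ∀ k, -1 ≤ playResult C v p k) :
    ∃ a b : List I, IsPlay C (-1) v (i :: a) ∧ IsPlay C (-1) v (j :: b) ∧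
      (i :: a).length = (j :: b).length ∧
      playResult C v (i :: a) = playResult C v (j :: b) := by
  by_cases h0 : C i j = 0
  · have h0' : C j i = 0 := (hzero i j).1 h0
    obtain ⟨P1, P2, P3⟩ := polyA1A1 C hdiag hi hj h0 h0'
    exact ⟨[j], [i], P1, P2, rfl, P3⟩
  · have h0' : C j i ≠ 0 := fun h => h0 ((hzero i j).2 h)
    have hCij : C i j ≤ -1 := by have := hoff i j hne; omega
    have hCji : C j i ≤ -1 := by have := hoff j i hne.symm; omega
    have hprod : C i j * C j i ≤ 3 := by
      by_contra h
      exact no_terminal_of_big C hdiag hoff hne (by omega) hi hj hp hterm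
    have hb1 : -3 ≤ C i j := by
      by_contra hcon
      push_neg at hcon
      nlinarith
    have ha : C i j = -1 ∨ C i j = -2 ∨ C i j = -3 := by omega
    rcases ha with h | h | h
    · rw [h] at hprod
      have hb : C j i = -1 ∨ C j i = -2 ∨ C j i = -3 := by omega
      rcases hb with h' | h' | h'
      · obtain ⟨P1, P2, P3⟩ := polyA2 C hdiag hi hj h h'
        exact ⟨[j,i], [i,j], P1, P2, rfl, P3⟩
      · obtain ⟨P1, P2, P3⟩ := polyB2 C hdiag hi hj h h'
        exact ⟨[j,i,j], [i,j,i], P1, P2, rfl, P3⟩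
      · obtain ⟨P1, P2, P3⟩ := polyG2 C hdiag hi hj h h'
        exact ⟨[j,i,j,i,j], [i,j,i,j,i], P1, P2, rfl, P3⟩
    · rw [h] at hprod
      have h' : C j i = -1 := by omega
      obtain ⟨P1, P2, P3⟩ := polyB2 C hdiag hj hi h' h
      exact ⟨[j,i,j], [i,j,i], P2, P1, rfl, P3.symm⟩
    · rw [h] at hprod
      have h' : C j i = -1 := by omega
      obtain ⟨P1, P2, P3⟩ := polyG2 C hdiag hj hi h' h
      exact ⟨[j,i,j,i,j], [i,j,i,j,i], P2, P1, rfl, P3.symm⟩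

/-- The main double statement, by induction on the length of a terminating play. -/
theorem strong_conv (hdiag : ∀ i, C i i = 2)
    (hoff : ∀ i j, i ≠ j → C i j ≤ 0)
    (hzero : ∀ i j, C i j = 0 ↔ C j i = 0) : ∀ n : ℕ,
    (∀ (v : I → ℝ) (p q : List I), IsPlay C (-1) v p →
      (∀ k, -1 ≤ playResult C v p k) → p.length = n →
      IsPlay C (-1) v q → (∀ k, -1 ≤ playResult C v q k) →
      q.length = n ∧ playResult C v q = playResult C v p) ∧
    (∀ (v : I → ℝ) (p q : List I), IsPlay C (-1) v p →
      (∀ k, -1 ≤ playResult C v p k) → p.length = n →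
      IsPlay C (-1) v q →
      ∃ r, IsPlay C (-1) (playResult C v q) r ∧
        (∀ k, -1 ≤ playResult C (playResult C v q) r k) ∧ q.length + r.length = n) := by
  intro n
  induction n with
  | zero =>
    constructor
    · intro v p q hp hpend hplen hq hqend
      rw [List.length_eq_zero_iff] at hplen
      subst hplen
      cases q with
      | nil => exact ⟨rfl, rfl⟩
      | cons j q' =>
        exact absurd (hpend j) (by simp only [playResult]; exact not_le.2 hq.1)
    · intro v p q hp hpend hplen hq
      rw [List.length_eq_zero_iff] at hplen
      subst hplen
      cases q with
      | nil => exact ⟨[], trivial, hpend, rfl⟩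
      | cons j q' =>
        exact absurd (hpend j) (by simp only [playResult]; exact not_le.2 hq.1)
  | succ n ih =>
    obtain ⟨IHA, IHB⟩ := ih
    have hA : ∀ (v : I → ℝ) (p q : List I), IsPlay C (-1) v p →
        (∀ k, -1 ≤ playResult C v p k) → p.length = n + 1 →
        IsPlay C (-1) v q → (∀ k, -1 ≤ playResult C v q k) →
        q.length = n + 1 ∧ playResult C v q = playResult C v p := by
      intro v p q hp hpend hplen hq hqend
      cases p with
      | nil => simp at hplen
      | cons i p' =>
      cases q with
      | nil =>
        exact absurd (hqend i)
          (not_le.2 (by simpa [playResult] using ((isPlay_cons C).1 hp).1))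
      | cons j q' =>
        obtain ⟨hvi, hp'⟩ := (isPlay_cons C).1 hp
        obtain ⟨hvj, hq'⟩ := (isPlay_cons C).1 hq
        by_cases hij : i = j
        · subst hij
          have := IHA (fire C i v) p' q' hp' hpend (by simpa using hplen) hq' hqend
          exact ⟨by simpa using this.1, this.2⟩
        · obtain ⟨a, b, hia, hjb, hlen, hend⟩ :=
            polygon C hdiag hoff hzero hij hvi hvj hp hpend
          -- a is a play from fire i v
          obtain ⟨-, hia'⟩ := (isPlay_cons C).1 hia
          obtain ⟨-, hjb'⟩ := (isPlay_cons C).1 hjb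
          -- extend a to a terminating play from fire i v
          obtain ⟨r, hr, hrend, hrlen⟩ :=
            IHB (fire C i v) p' a hp' hpend (by simpa using hplen) hia'
          -- a ++ r is a terminating play from fire i v of length n
          have har : IsPlay C (-1) (fire C i v) (a ++ r) :=
            (isPlay_append C).2 ⟨hia', hr⟩
          have harend : ∀ k, -1 ≤ playResult C (fire C i v) (a ++ r) k := by
            rw [playResult_append]; exact hrend
          have harlen : (a ++ r).length = n := by simpa using hrlen
          have hares := IHA (fire C i v) p' (a ++ r) hp' hpend
            (by simpa using hplen) har harend
          -- b ++ r is a terminating play from fire j v of length n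
          have hw : playResult C (fire C j v) b = playResult C (fire C i v) a := by
            simpa [playResult] using hend.symm
          have hbr : IsPlay C (-1) (fire C j v) (b ++ r) :=
            (isPlay_append C).2 ⟨hjb', by rw [hw]; exact hr⟩
          have hbrend : ∀ k, -1 ≤ playResult C (fire C j v) (b ++ r) k := by
            rw [playResult_append, hw]; exact hrend
          have hbrlen : (b ++ r).length = n := by
            have : a.length = b.length := by simpa using hlen
            simp only [List.length_append] at harlen ⊢
            omega
          have hfin := IHA (fire C j v) (b ++ r) q' hbr hbrend hbrlen hq' hqend
          refine ⟨by simpa using hfin.1, ?_⟩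
          have e1 : playResult C (fire C j v) (b ++ r) =
              playResult C (fire C i v) (a ++ r) := by
            rw [playResult_append, playResult_append, hw]
          calc playResult C v (j :: q') = playResult C (fire C j v) q' := rfl
            _ = playResult C (fire C j v) (b ++ r) := hfin.2
            _ = playResult C (fire C i v) (a ++ r) := e1
            _ = playResult C (fire C i v) p' := hares.2
            _ = playResult C v (i :: p') := rfl
    refine ⟨hA, ?_⟩
    intro v p q hp hpend hplen hq
    cases p with
    | nil => simp at hplen
    | cons i p' =>
    cases q with
    | nil =>
      exact ⟨i :: p', hp, hpend, by simpa using hplen⟩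
    | cons j q' =>
      obtain ⟨hvi, hp'⟩ := (isPlay_cons C).1 hp
      obtain ⟨hvj, hq'⟩ := (isPlay_cons C).1 hq
      by_cases hij : i = j
      · subst hij
        obtain ⟨r, hr, hrend, hrlen⟩ :=
          IHB (fire C i v) p' q' hp' hpend (by simpa using hplen) hq'
        exact ⟨r, hr, hrend, by simp only [List.length_cons]; omega⟩
      · obtain ⟨a, b, hia, hjb, hlen, hend⟩ :=
          polygon C hdiag hoff hzero hij hvi hvj
            ((isPlay_cons C).2 ⟨hvi, hp'⟩) hpend
        obtain ⟨-, hia'⟩ := (isPlay_cons C).1 hia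
        obtain ⟨-, hjb'⟩ := (isPlay_cons C).1 hjb
        obtain ⟨r₀, hr₀, hr₀end, hr₀len⟩ :=
          IHB (fire C i v) p' a hp' hpend (by simpa using hplen) hia'
        have hw : playResult C (fire C j v) b = playResult C (fire C i v) a := by
          simpa [playResult] using hend.symm
        have hbr : IsPlay C (-1) (fire C j v) (b ++ r₀) :=
          (isPlay_append C).2 ⟨hjb', by rw [hw]; exact hr₀⟩
        have hbrend : ∀ k, -1 ≤ playResult C (fire C j v) (b ++ r₀) k := by
          rw [playResult_append, hw]; exact hr₀end
        have hbrlen : (b ++ r₀).length = n := by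
          have : a.length = b.length := by simpa using hlen
          simp only [List.length_append]
          omega
        obtain ⟨r, hr, hrend, hrlen⟩ :=
          IHB (fire C j v) (b ++ r₀) q' hbr hbrend hbrlen hq'
        exact ⟨r, hr, hrend, by simp only [List.length_cons]; omega⟩

end Aux

/-- If two `(<-1)`-plays from `v` each end at a configuration with no coordinate `< -1`,
then they have the same length and end at the same configuration. -/
theorem lt_neg_one_play_confluence
    {I : Type*} [Fintype I] [Nonempty I] (C : I → I → ℤ)
    (hdiag : ∀ i, C i i = 2)
    (hoff : ∀ i j, i ≠ j → C i j ≤ 0)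
    (hzero : ∀ i j, C i j = 0 ↔ C j i = 0)
    (v : I → ℝ) (p q : List I)
    (hp : IsPlay C (-1) v p) (hpend : ∀ j, -1 ≤ playResult C v p j)
    (hq : IsPlay C (-1) v q) (hqend : ∀ j, -1 ≤ playResult C v q j) :
    p.length = q.length ∧ playResult C v p = playResult C v q := by
  obtain ⟨hlen, hres⟩ :=
    (strong_conv C hdiag hoff hzero p.length).1 v p q hp hpend rfl hq hqend
  exact ⟨hlen.symm, hres.symm⟩
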